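/- Let D ⊆ ℝⁿ, f₀ : ℝⁿ × ℝᵖ → ℝⁿ, κ : ℝⁿ → ℝᵖ, and let V : ℝⁿ → ℝ be C¹. Let α₃, α₄ be class 𝒦 functions with α₃ a bijection of [0,∞), α₃⁻¹ Lipschitz with constant L₁ > 0 and α₄ Lipschitz with constant L₂ > 0, and suppose for all y ∈ D: ∇V(y)·f₀(y, κ(y)) ≤ −α₃(‖y‖) and ‖∇V(y)‖ ≤ α₄(‖y‖). Let ϑ ∈ (0,1), t_k ∈ ℝ, τ > 0, x_k ∈ D, and let x : [t_k, t_k + τ] → D be differentiable with x(t_k) = x_k and ẋ(t) = f₀(x(t), κ(x_k)) for all t ∈ [t_k, t_k + τ]. Suppose there are M₁, M₂ ≥ 0 such that ‖f₀(x(t), κ(x_k)) − f₀(x(t), κ(x(t)))‖ ≤ M₁(t − t_k) + M₂(t − t_k)² for all t ∈ [t_k, t_k + τ], and that M₁τ + M₂τ² ≤ ϑ/(L₁L₂). Then for all t ∈ [t_k, t_k + τ]: (d/dt) V(x(t)) ≤ −(1 − ϑ)·α₃(‖x(t)‖). -/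

import Mathlib

/-- A function `α : [0,∞) → [0,∞)` is of class 𝒦 if it is continuous, strictly increasing,
and vanishes at 0. -/
def IsClassK (α : ℝ → ℝ) : Prop :=
  ContinuousOn α (Set.Ici 0) ∧ StrictMonoOn α (Set.Ici 0) ∧ α 0 = 0

/-- per-sampling-interval decrease: under the zero-order-hold input `κ(x_k)`,
if the holding perturbation obeys `‖d_h(t)‖ ≤ M₁(t−t_k) + M₂(t−t_k)²` and the inter-sampling
time satisfies `M₁τ + M₂τ² ≤ ϑ/(L₁L₂)`, then `(d/dt)V(x(t)) ≤ −(1−ϑ)α₃(‖x(t)‖)`. -/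
theorem stmt14 {n p : ℕ} (D : Set (EuclideanSpace ℝ (Fin n)))
    (f₀ : EuclideanSpace ℝ (Fin n) → EuclideanSpace ℝ (Fin p) → EuclideanSpace ℝ (Fin n))
    (κ : EuclideanSpace ℝ (Fin n) → EuclideanSpace ℝ (Fin p))
    (V : EuclideanSpace ℝ (Fin n) → ℝ) (hV : ContDiff ℝ 1 V)
    (α₃ α₄ inv₃ : ℝ → ℝ)
    (h₃K : IsClassK α₃) (h₄K : IsClassK α₄)
    (h₃bij : Set.BijOn α₃ (Set.Ici 0) (Set.Ici 0))
    (hinv₃ : Set.InvOn inv₃ α₃ (Set.Ici 0) (Set.Ici 0))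
    (L₁ L₂ : ℝ) (hL₁ : 0 < L₁) (hL₂ : 0 < L₂)
    (hinv₃Lip : ∀ s ∈ Set.Ici (0:ℝ), ∀ t ∈ Set.Ici (0:ℝ), |inv₃ s - inv₃ t| ≤ L₁ * |s - t|)
    (hα₄Lip : ∀ s ∈ Set.Ici (0:ℝ), ∀ t ∈ Set.Ici (0:ℝ), |α₄ s - α₄ t| ≤ L₂ * |s - t|)
    (hLya : ∀ y ∈ D, (inner ℝ (gradient V y) (f₀ y (κ y)) : ℝ) ≤ -α₃ ‖y‖ ∧
      ‖gradient V y‖ ≤ α₄ ‖y‖)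
    (ϑ : ℝ) (hϑ : 0 < ϑ) (hϑ1 : ϑ < 1)
    (tk τ : ℝ) (hτ : 0 < τ)
    (xk : EuclideanSpace ℝ (Fin n)) (hxk : xk ∈ D)
    (x : ℝ → EuclideanSpace ℝ (Fin n))
    (hxD : ∀ t ∈ Set.Icc tk (tk + τ), x t ∈ D)
    (hx0 : x tk = xk)
    (hdyn : ∀ t ∈ Set.Icc tk (tk + τ),
      HasDerivWithinAt x (f₀ (x t) (κ xk)) (Set.Icc tk (tk + τ)) t)
    (M₁ M₂ : ℝ) (hM₁ : 0 ≤ M₁) (hM₂ : 0 ≤ M₂)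
    (hdh : ∀ t ∈ Set.Icc tk (tk + τ),
      ‖f₀ (x t) (κ xk) - f₀ (x t) (κ (x t))‖ ≤ M₁ * (t - tk) + M₂ * (t - tk) ^ 2)
    (hτcond : M₁ * τ + M₂ * τ ^ 2 ≤ ϑ / (L₁ * L₂)) :
    ∀ t ∈ Set.Icc tk (tk + τ), ∀ w : ℝ,
      HasDerivWithinAt (fun s => V (x s)) w (Set.Icc tk (tk + τ)) t →
      w ≤ -(1 - ϑ) * α₃ ‖x t‖ := by
  intro t ht w hw
  set g := gradient V (x t) with hg
  have hdiff : DifferentiableAt ℝ V (x t) := (hV.differentiable one_ne_zero).differentiableAt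
  have hFD : HasFDerivAt V (InnerProductSpace.toDual ℝ _ g) (x t) :=
    hdiff.hasGradientAt.hasFDerivAt
  have hcomp : HasDerivWithinAt (fun s => V (x s))
      ((InnerProductSpace.toDual ℝ _ g) (f₀ (x t) (κ xk))) (Set.Icc tk (tk + τ)) t :=
    hFD.comp_hasDerivWithinAt t (hdyn t ht)
  have hud : UniqueDiffWithinAt ℝ (Set.Icc tk (tk + τ)) t :=
    (uniqueDiffOn_Icc (by linarith)) t ht
  have hweq : w = (inner ℝ g (f₀ (x t) (κ xk)) : ℝ) := by
    have h1 := hw.derivWithin hud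
    have h2 := hcomp.derivWithin hud
    rw [h1] at h2
    rw [h2]; exact InnerProductSpace.toDual_apply_apply
  -- basic facts
  have hxtD : x t ∈ D := hxD t ht
  obtain ⟨hder, hgn⟩ := hLya (x t) hxtD
  set r := ‖x t‖ with hr
  have hr0 : (0:ℝ) ≤ r := norm_nonneg _
  have hα₃r0 : 0 ≤ α₃ r := h₃bij.mapsTo hr0
  -- α₄ r ≤ L₂ * r
  have h1 : α₄ r ≤ L₂ * r := by
    have := hα₄Lip r hr0 0 Set.self_mem_Ici
    rw [h₄K.2.2, sub_zero, sub_zero, abs_of_nonneg hr0] at this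
    calc α₄ r ≤ |α₄ r| := le_abs_self _
    _ ≤ L₂ * r := this
  -- r ≤ L₁ * α₃ r
  have h2 : r ≤ L₁ * α₃ r := by
    have hmem : α₃ r ∈ Set.Ici (0:ℝ) := h₃bij.mapsTo hr0
    have := hinv₃Lip (α₃ r) hmem 0 Set.self_mem_Ici
    have e0 : inv₃ 0 = 0 := by
      have := hinv₃.1 (le_refl (0:ℝ))
      rwa [h₃K.2.2] at this
    have er : inv₃ (α₃ r) = r := hinv₃.1 hr0
    rw [e0, er, sub_zero, sub_zero, abs_of_nonneg hα₃r0] at this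
    calc r ≤ |r| := le_abs_self _
    _ ≤ L₁ * α₃ r := this
  have hα₄r0 : 0 ≤ α₄ r := by
    rcases eq_or_lt_of_le hr0 with h | h
    · rw [← h, h₄K.2.2]
    · have := h₄K.2.1 Set.self_mem_Ici hr0 h
      rw [h₄K.2.2] at this; exact this.le
  -- perturbation bound
  have htτ : t - tk ≤ τ := by linarith [ht.2]
  have htk : 0 ≤ t - tk := by linarith [ht.1]
  have hdhb : ‖f₀ (x t) (κ xk) - f₀ (x t) (κ (x t))‖ ≤ ϑ / (L₁ * L₂) := by
    refine le_trans (hdh t ht) (le_trans ?_ hτcond)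
    have : (t - tk)^2 ≤ τ^2 := by nlinarith
    nlinarith
  -- split inner product
  have hsplit : (inner ℝ g (f₀ (x t) (κ xk)) : ℝ)
      = (inner ℝ g (f₀ (x t) (κ (x t))) : ℝ)
        + (inner ℝ g (f₀ (x t) (κ xk) - f₀ (x t) (κ (x t))) : ℝ) := by
    rw [inner_sub_right]; ring
  have hCS : (inner ℝ g (f₀ (x t) (κ xk) - f₀ (x t) (κ (x t))) : ℝ)
      ≤ ‖g‖ * ‖f₀ (x t) (κ xk) - f₀ (x t) (κ (x t))‖ := real_inner_le_norm _ _
  have hgnn : 0 ≤ ‖g‖ := norm_nonneg _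
  have hbound : (inner ℝ g (f₀ (x t) (κ xk)) : ℝ)
      ≤ -α₃ r + α₄ r * (ϑ / (L₁ * L₂)) := by
    rw [hsplit]
    have h4 : ‖g‖ * ‖f₀ (x t) (κ xk) - f₀ (x t) (κ (x t))‖ ≤ α₄ r * (ϑ / (L₁ * L₂)) := by
      have hpos : 0 ≤ ϑ / (L₁ * L₂) := by positivity
      exact mul_le_mul hgn hdhb (norm_nonneg _) hα₄r0
    linarith [hCS, hder]
  rw [hweq]
  have hα₄le : α₄ r ≤ L₁ * L₂ * α₃ r := by nlinarith
  have hL : 0 < L₁ * L₂ := by positivity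
  have : α₄ r * (ϑ / (L₁ * L₂)) ≤ ϑ * α₃ r := by
    rw [div_eq_mul_inv, ← sub_nonneg]
    have e : ϑ * α₃ r - α₄ r * (ϑ * (L₁ * L₂)⁻¹)
        = (L₁ * L₂ * α₃ r - α₄ r) * ϑ * (L₁ * L₂)⁻¹ := by
      field_simp
    rw [e]
    exact mul_nonneg (mul_nonneg (by linarith) hϑ.le) (by positivity)
  linarith
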